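/- Let ℙ be a translation-invariant Borel probability measure on Ω, let a ∈ ℤ₊², and let A ⊆ 𝕋 satisfy the growth property, with {ω : T_z^ω ∈ A} measurable for every z ∈ ℤ₊². Set Ω^a = {ω ∈ Ω : a belongs to both γ_{a+(1,0)}^ω and γ_{a+(0,1)}^ω}. Then ℙ(T_{a+(1,1)} ∈ A and Ω^a) ≤ ℙ(T_{(1,1)} ∈ A and τ_a(Ω^a)). -/

import Mathlib

open scoped NNReal

/-- A site of the lattice `ℤ²`. -/
abbrev Site : Type := ℤ × ℤ

/-- The positive quadrant `ℤ₊²`. -/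
def posQuad : Set Site := {z : Site | 0 ≤ z.1 ∧ 0 ≤ z.2}

/-- An admissible (up-right) step. -/
def IsStep (u v : Site) : Prop := v = u + (1, 0) ∨ v = u + (0, 1)

/-- `γ` is an up-right path from `(0,0)` to `z`, i.e. `γ ∈ Γ_z`. -/
def IsPathTo (z : Site) (γ : List Site) : Prop :=
  γ.head? = some ((0, 0) : Site) ∧ γ.getLast? = some z ∧ γ.Chain' IsStep

/-- The length `ω(γ) = Σ_{z ∈ γ} ω(z)` of a path `γ` under the configuration `ω`. -/
noncomputable def plen (ω : Site → ℝ) (γ : List Site) : ℝ := (γ.map ω).sum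

/-- `γ ∈ Γ_z` is `ω`-optimal if its length is maximal over `Γ_z`. -/
def IsOptimal (ω : Site → ℝ) (z : Site) (γ : List Site) : Prop :=
  IsPathTo z γ ∧ ∀ γ' : List Site, IsPathTo z γ' → plen ω γ' ≤ plen ω γ

/-- `γ` is below `γ'`: at every step index, the second coordinate of the site of `γ`
is at most that of the corresponding site of `γ'`. -/
def Below (γ γ' : List Site) : Prop :=
  ∀ (i : ℕ) (h : i < γ.length) (h' : i < γ'.length),
    (γ.get ⟨i, h⟩).2 ≤ (γ'.get ⟨i, h'⟩).2

/-- `γ` is the low-optimal path of `Γ_z`: it is `ω`-optimal and below every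
`ω`-optimal path of `Γ_z`. -/
def IsLowOptimal (ω : Site → ℝ) (z : Site) (γ : List Site) : Prop :=
  IsOptimal ω z γ ∧ ∀ γ' : List Site, IsOptimal ω z γ' → Below γ γ'

open Classical in
/-- The low-optimal path `γ_z^ω` (an arbitrary default when it does not exist). -/
noncomputable def lowOpt (ω : Site → ℝ) (z : Site) : List Site :=
  if h : ∃ γ : List Site, IsLowOptimal ω z γ then h.choose else []

/-- The vertex set `V(T_z^ω) = {z' ∈ ℤ₊² : z ∈ γ_{z'}^ω}` of the subtree rooted at `z`. -/
def treeV (ω : Site → ℝ) (z : Site) : Set Site :=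
  {z' : Site | z' ∈ posQuad ∧ z ∈ lowOpt ω z'}

/-- A (rooted) subtree of the last passage percolation tree, recorded by its root
and its vertex set. -/
structure LPPTree where
  root : Site
  verts : Set Site

/-- The subtree `T_z^ω` of the last passage percolation tree rooted at `z`. -/
def subtree (ω : Site → ℝ) (z : Site) : LPPTree := ⟨z, treeV ω z⟩

/-- The set `𝕋` of all subtrees `T_z^ω`, `z ∈ ℤ₊²`, `ω ∈ Ω`. -/
def TreeSet : Set LPPTree :=
  {T : LPPTree | ∃ (ω : Site → ℝ) (z : Site),
    (∀ s : Site, 0 ≤ ω s) ∧ z ∈ posQuad ∧ T = subtree ω z}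

/-- A set `A ⊆ 𝕋` satisfies the growth property if whenever `T ∈ A`, `T' ∈ 𝕋` and
`V(T) - r(T) ⊆ V(T') - r(T')`, then `T' ∈ A`. -/
def GrowthProperty (A : Set LPPTree) : Prop :=
  ∀ T ∈ A, ∀ T' ∈ TreeSet,
    (· - T.root) '' T.verts ⊆ (· - T'.root) '' T'.verts → T' ∈ A

/-- A point of the configuration space `Ω = [0,∞)^{ℤ²}`. -/
abbrev CfgNN : Type := Site → ℝ≥0

/-- The real-valued configuration associated to a point of `Ω`. -/
noncomputable def toCfg (ω : CfgNN) : Site → ℝ := fun z => (ω z : ℝ)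

/-- The translation operator `τ_a(ω) = ω(a + ·)` on `Ω`. -/
def shift (a : Site) (ω : CfgNN) : CfgNN := fun z => ω (a + z)

/-- The event `Ω^a = {ω ∈ Ω : a belongs to both γ_{a+(1,0)}^ω and γ_{a+(0,1)}^ω}`. -/
def OmegaSup (a : Site) : Set CfgNN :=
  {ω : CfgNN | a ∈ lowOpt (toCfg ω) (a + (1, 0)) ∧ a ∈ lowOpt (toCfg ω) (a + (0, 1))}

-- Auxiliary lemmas
def PathFT (u z : Site) (γ : List Site) : Prop :=
  γ.head? = some u ∧ γ.getLast? = some z ∧ γ.Chain' IsStep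

lemma isPathTo_iff {z : Site} {γ : List Site} : IsPathTo z γ ↔ PathFT ((0,0) : Site) z γ := Iff.rfl

lemma get_zero_of_head? {γ : List Site} {u : Site} (hh : γ.head? = some u) (h : 0 < γ.length) :
    γ.get ⟨0, h⟩ = u := by
  cases γ with
  | nil => simp at h
  | cons x t => simp only [List.head?_cons, Option.some.injEq] at hh; simpa using hh

lemma chain'_get_step {γ : List Site} (hc : γ.Chain' IsStep) {i j : ℕ} (hij : j = i + 1)
    (hi : i < γ.length) (hj : j < γ.length) :
    IsStep (γ.get ⟨i, hi⟩) (γ.get ⟨j, hj⟩) := by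
  subst hij
  exact List.isChain_iff_getElem.mp hc i (by omega)

lemma path_get {γ : List Site} {u : Site} (hh : γ.head? = some u) (hc : γ.Chain' IsStep) :
    ∀ (i : ℕ) (h : i < γ.length), ((γ.get ⟨i, h⟩).1 + (γ.get ⟨i, h⟩).2 = u.1 + u.2 + i)
      ∧ u.1 ≤ (γ.get ⟨i, h⟩).1 ∧ u.2 ≤ (γ.get ⟨i, h⟩).2 := by
  intro i
  induction i with
  | zero =>
    intro h
    rw [get_zero_of_head? hh h]
    simp
  | succ n ih =>
    intro h
    have hn : n < γ.length := by omega
    obtain ⟨hsum, h1, h2⟩ := ih hn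
    have hstep := chain'_get_step hc rfl hn h
    simp only [List.get_eq_getElem] at hsum h1 h2 ⊢
    rcases hstep with hv | hv <;> simp only [List.get_eq_getElem] at hv <;> rw [hv] <;>
      refine ⟨?_, ?_, ?_⟩ <;>
      (simp only [Prod.fst_add, Prod.snd_add]; push_cast; (try simp); omega)

lemma PathFT.getLast_get {u z : Site} {γ : List Site} (h : PathFT u z γ) :
    ∃ hl : γ.length - 1 < γ.length, γ.get ⟨γ.length - 1, hl⟩ = z := by
  have hne : γ ≠ [] := by rintro rfl; simp [PathFT] at h
  have hpos : 0 < γ.length := List.length_pos_iff.mpr hne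
  refine ⟨by omega, ?_⟩
  have := h.2.1
  rw [List.getLast?_eq_getElem?, List.getElem?_eq_getElem (by omega)] at this
  simpa using this

lemma PathFT.length_eq {u z : Site} {γ : List Site} (h : PathFT u z γ) :
    (γ.length : ℤ) = z.1 + z.2 - u.1 - u.2 + 1 := by
  obtain ⟨hl, hz⟩ := h.getLast_get
  have := (path_get h.1 h.2.2 (γ.length - 1) hl).1
  rw [hz] at this
  have hpos : 0 < γ.length := by omega
  have hcast : ((γ.length - 1 : ℕ) : ℤ) = (γ.length : ℤ) - 1 := by
    push_cast [Nat.cast_sub hpos]; ring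
  omega

lemma PathFT.le_coords {u z : Site} {γ : List Site} (h : PathFT u z γ) :
    u.1 ≤ z.1 ∧ u.2 ≤ z.2 := by
  obtain ⟨hl, hz⟩ := h.getLast_get
  have := (path_get h.1 h.2.2 (γ.length - 1) hl).2
  rw [hz] at this
  exact this

lemma PathFT.get_index {u z : Site} {γ : List Site} (h : PathFT u z γ) {i : ℕ}
    (hi : i < γ.length) {w : Site} (hw : γ.get ⟨i, hi⟩ = w) :
    (i : ℤ) = w.1 + w.2 - u.1 - u.2 := by
  have := (path_get h.1 h.2.2 i hi).1
  rw [hw] at this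
  omega

lemma below_antisymm {u z : Site} {γ γ' : List Site} (h : PathFT u z γ) (h' : PathFT u z γ')
    (hb : Below γ γ') (hb' : Below γ' γ) : γ = γ' := by
  have hlen : γ.length = γ'.length := by
    have := h.length_eq; have := h'.length_eq; omega
  refine List.ext_get hlen (fun n h1 h2 => ?_)
  have e2 : (γ.get ⟨n, h1⟩).2 = (γ'.get ⟨n, h2⟩).2 :=
    le_antisymm (hb n h1 h2) (hb' n h2 h1)
  have s1 := (path_get h.1 h.2.2 n h1).1
  have s2 := (path_get h'.1 h'.2.2 n h2).1
  have e1 : (γ.get ⟨n, h1⟩).1 = (γ'.get ⟨n, h2⟩).1 := by omega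
  exact Prod.ext e1 e2

lemma lowOptimal_unique {ω : Site → ℝ} {z : Site} {γ γ' : List Site}
    (h : IsLowOptimal ω z γ) (h' : IsLowOptimal ω z γ') : γ = γ' :=
  below_antisymm h.1.1 h'.1.1 (h.2 γ' h'.1) (h'.2 γ h.1)

lemma lowOpt_eq {ω : Site → ℝ} {z : Site} {γ : List Site} (h : IsLowOptimal ω z γ) :
    lowOpt ω z = γ := by
  rw [lowOpt, dif_pos ⟨γ, h⟩]
  exact lowOptimal_unique (Exists.choose_spec (⟨γ, h⟩ : ∃ γ, IsLowOptimal ω z γ)) h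

lemma mem_lowOpt_spec {ω : Site → ℝ} {z' w : Site} (h : w ∈ lowOpt ω z') :
    IsLowOptimal ω z' (lowOpt ω z') := by
  by_cases he : ∃ γ, IsLowOptimal ω z' γ
  · rw [lowOpt, dif_pos he]; exact he.choose_spec
  · rw [lowOpt, dif_neg he] at h; simp at h

lemma plen_append (ω : Site → ℝ) (p q : List Site) : plen ω (p ++ q) = plen ω p + plen ω q := by
  simp [plen]

lemma plen_glue (ω : Site → ℝ) {w : Site} (p : List Site) {s : List Site}
    (hs : s.head? = some w) :
    plen ω (p ++ s.tail) + ω w = plen ω p + plen ω s := by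
  cases s with
  | nil => simp at hs
  | cons x t =>
    simp only [List.head?_cons, Option.some.injEq] at hs
    subst hs
    simp [plen]
    ring

lemma pathFT_take {u z : Site} {γ : List Site} (h : PathFT u z γ) {k : ℕ} (hk : k < γ.length) :
    PathFT u (γ.get ⟨k, hk⟩) (γ.take (k + 1)) := by
  refine ⟨?_, ?_, ?_⟩
  · cases γ with
    | nil => simp at hk
    | cons x t =>
      have hx : x = u := by simpa using h.1
      subst hx
      simp [List.take_succ_cons]
  · rw [List.getLast?_eq_getElem?]
    have hlen : (γ.take (k + 1)).length = k + 1 := by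
      rw [List.length_take]; omega
    rw [hlen]
    simp only [Nat.add_sub_cancel, List.getElem?_take, if_pos (Nat.lt_succ_self k)]
    rw [List.getElem?_eq_getElem hk]
    simp
  · have := h.2.2
    rw [← List.take_append_drop (k + 1) γ] at this
    exact this.left_of_append

lemma pathFT_drop {u z : Site} {γ : List Site} (h : PathFT u z γ) {k : ℕ} (hk : k < γ.length) :
    PathFT (γ.get ⟨k, hk⟩) z (γ.drop k) := by
  have hlen : 0 < (γ.drop k).length := by rw [List.length_drop]; omega
  refine ⟨?_, ?_, ?_⟩
  · rw [List.head?_drop, List.getElem?_eq_getElem hk]; simp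
  · obtain ⟨w', hw'⟩ := Option.isSome_iff_exists.mp
      (by rw [List.getLast?_isSome]; exact List.ne_nil_of_length_pos hlen :
        (γ.drop k).getLast?.isSome)
    have := h.2.1
    rw [← List.take_append_drop k γ, List.getLast?_append, hw'] at this
    simp only [Option.some_or] at this
    rw [hw', this]
  · have := h.2.2
    rw [← List.take_append_drop k γ] at this
    exact this.right_of_append

lemma pathFT_glue {u w z : Site} {p s : List Site} (hp : PathFT u w p) (hs : PathFT w z s) :
    PathFT u z (p ++ s.tail) := by
  obtain ⟨x, t, rfl⟩ : ∃ x t, s = x :: t := by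
    cases s with
    | nil => simp [PathFT] at hs
    | cons x t => exact ⟨x, t, rfl⟩
  have hx : x = w := by simpa using hs.1
  subst hx
  refine ⟨?_, ?_, ?_⟩
  · obtain ⟨y, q, rfl⟩ : ∃ y q, p = y :: q := by
      cases p with
      | nil => simp [PathFT] at hp
      | cons y q => exact ⟨y, q, rfl⟩
    have hy : y = u := by simpa using hp.1
    subst hy
    simp
  · cases t with
    | nil =>
      have hxz : x = z := by simpa using hs.2.1
      simpa [hxz] using hp.2.1
    | cons y t' =>
      simp only [List.tail_cons]
      rw [List.getLast?_append]
      have h2 : (y :: t').getLast? = some z := by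
        have := hs.2.1
        rwa [List.getLast?_cons_cons] at this
      rw [h2]
      simp
  · apply List.isChain_append.mpr
    refine ⟨hp.2.2, (List.isChain_cons.mp hs.2.2).2, fun a ha b hb => ?_⟩
    rw [hp.2.1] at ha
    simp only [Option.mem_def, Option.some.injEq] at ha
    subst ha
    exact (List.isChain_cons.mp hs.2.2).1 b hb

lemma isStep_add (a : Site) {u v : Site} (h : IsStep u v) : IsStep (u + a) (v + a) := by
  rcases h with h | h <;> [left; right] <;> rw [h] <;> ring

lemma isStep_sub (a : Site) {u v : Site} (h : IsStep u v) : IsStep (u - a) (v - a) := by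
  rcases h with h | h <;> [left; right] <;> rw [h] <;> ring

lemma pathFT_map_add (a : Site) {u z : Site} {γ : List Site} (h : PathFT u z γ) :
    PathFT (u + a) (z + a) (γ.map (· + a)) := by
  refine ⟨?_, ?_, ?_⟩
  · rw [List.head?_map, h.1]; rfl
  · rw [List.getLast?_map, h.2.1]; rfl
  · exact (List.isChain_map _).mpr (h.2.2.imp (fun _ _ => isStep_add a))

lemma pathFT_map_sub (a : Site) {u z : Site} {γ : List Site} (h : PathFT u z γ) :
    PathFT (u - a) (z - a) (γ.map (· - a)) := by
  refine ⟨?_, ?_, ?_⟩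
  · rw [List.head?_map, h.1]; rfl
  · rw [List.getLast?_map, h.2.1]; rfl
  · exact (List.isChain_map _).mpr (h.2.2.imp (fun _ _ => isStep_sub a))

lemma plen_map_add (ω : Site → ℝ) (a : Site) (γ : List Site) :
    plen ω (γ.map (· + a)) = plen (fun x => ω (a + x)) γ := by
  simp [plen, List.map_map, Function.comp_def, add_comm]

lemma map_sub_add (a : Site) (γ : List Site) : (γ.map (· - a)).map (· + a) = γ := by
  rw [List.map_map]
  simp [Function.comp_def]

lemma prefix_lowOptimal {ω : Site → ℝ} {z' : Site} {γ : List Site}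
    (hγ : IsLowOptimal ω z' γ) {k : ℕ} (hk : k < γ.length) :
    IsLowOptimal ω (γ.get ⟨k, hk⟩) (γ.take (k + 1)) := by
  set w := γ.get ⟨k, hk⟩ with hw
  have hγP : PathFT ((0,0) : Site) z' γ := isPathTo_iff.mp hγ.1.1
  have hp : PathFT ((0,0) : Site) w (γ.take (k + 1)) := pathFT_take hγP hk
  have hs : PathFT w z' (γ.drop k) := pathFT_drop hγP hk
  set p := γ.take (k + 1) with hpdef
  set s := γ.drop k with hsdef
  have hsplit : γ = p ++ s.tail := by
    rw [hpdef, hsdef, List.tail_drop, List.take_append_drop]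
  have hplen : plen ω γ + ω w = plen ω p + plen ω s := by
    conv_lhs => rw [hsplit]
    exact plen_glue ω p hs.1
  have hopt : ∀ ρ : List Site, IsPathTo w ρ → plen ω ρ ≤ plen ω p := by
    intro ρ hρ
    have hφ : PathFT ((0,0) : Site) z' (ρ ++ s.tail) := pathFT_glue (isPathTo_iff.mp hρ) hs
    have hφlen : plen ω (ρ ++ s.tail) + ω w = plen ω ρ + plen ω s := plen_glue ω ρ hs.1
    have hle : plen ω (ρ ++ s.tail) ≤ plen ω γ := hγ.1.2 _ (isPathTo_iff.mpr hφ)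
    linarith
  refine ⟨⟨isPathTo_iff.mpr hp, hopt⟩, ?_⟩
  intro ρ hρopt
  have hρ : PathFT ((0,0) : Site) w ρ := isPathTo_iff.mp hρopt.1
  have hφ : PathFT ((0,0) : Site) z' (ρ ++ s.tail) := pathFT_glue hρ hs
  have hφlen : plen ω (ρ ++ s.tail) + ω w = plen ω ρ + plen ω s := plen_glue ω ρ hs.1
  have hρp : plen ω ρ = plen ω p :=
    le_antisymm (hopt ρ hρopt.1) (hρopt.2 p (isPathTo_iff.mpr hp))
  have hφγ : plen ω (ρ ++ s.tail) = plen ω γ := by linarith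
  have hφopt : IsOptimal ω z' (ρ ++ s.tail) :=
    ⟨isPathTo_iff.mpr hφ, fun ψ hψ => hφγ ▸ hγ.1.2 ψ hψ⟩
  have hbel : Below γ (ρ ++ s.tail) := hγ.2 _ hφopt
  -- lengths
  have hlρ : ρ.length = k + 1 := by
    have h1 := hρ.length_eq
    have h2 := hp.length_eq
    have h3 : p.length = k + 1 := by rw [hpdef, List.length_take]; omega
    omega
  intro i hi hi'
  have hik : i < k + 1 := by
    rw [hpdef, List.length_take] at hi; omega
  have hiγ : i < γ.length := by omega
  have hiφ : i < (ρ ++ s.tail).length := by rw [List.length_append]; omega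
  have e1 : p.get ⟨i, hi⟩ = γ.get ⟨i, hiγ⟩ := by
    simp only [List.get_eq_getElem, hpdef, List.getElem_take]
  have e2 : (ρ ++ s.tail).get ⟨i, hiφ⟩ = ρ.get ⟨i, hi'⟩ := by
    simp only [List.get_eq_getElem, List.getElem_append]
    rw [dif_pos (by omega : i < ρ.length)]
  have := hbel i hiγ hiφ
  rw [e2] at this
  rw [e1]
  exact this

lemma suffix_lowOptimal {ω : Site → ℝ} {z' a : Site} {γ : List Site}
    (hγ : IsLowOptimal ω z' γ) {k : ℕ} (hk : k < γ.length)
    (hka : γ.get ⟨k, hk⟩ = a) :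
    IsLowOptimal (fun x => ω (a + x)) (z' - a) ((γ.drop k).map (· - a)) := by
  set ω' : Site → ℝ := fun x => ω (a + x) with hω'
  have hγP : PathFT ((0,0) : Site) z' γ := isPathTo_iff.mp hγ.1.1
  have hs : PathFT a z' (γ.drop k) := by
    have := pathFT_drop hγP hk
    rwa [hka] at this
  have hp : PathFT ((0,0) : Site) a (γ.take (k + 1)) := by
    have := pathFT_take hγP hk
    rwa [hka] at this
  set p := γ.take (k + 1) with hpdef
  set s := γ.drop k with hsdef
  set σ := s.map (· - a) with hσdef
  have h00 : a - a = ((0,0) : Site) := by rw [Prod.mk_zero_zero, sub_self]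
  have hσ : PathFT ((0,0) : Site) (z' - a) σ := by
    have := pathFT_map_sub a hs
    rwa [h00] at this
  have hsplit : γ = p ++ s.tail := by
    rw [hpdef, hsdef, List.tail_drop, List.take_append_drop]
  have hplen : plen ω γ + ω a = plen ω p + plen ω s := by
    conv_lhs => rw [hsplit]
    exact plen_glue ω p hs.1
  have hplenσ : plen ω' σ = plen ω s := by
    rw [← plen_map_add ω a σ, hσdef, map_sub_add]
  have hplength : p.length = k + 1 := by rw [hpdef, List.length_take]; omega
  -- the lift of a path ρ to z' - a
  have hlift : ∀ ρ : List Site, PathFT ((0,0) : Site) (z' - a) ρ →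
      PathFT a z' (ρ.map (· + a)) := by
    intro ρ hρ
    have := pathFT_map_add a hρ
    rwa [Prod.mk_zero_zero, zero_add, sub_add_cancel] at this
  have hopt : ∀ ρ : List Site, IsPathTo (z' - a) ρ → plen ω' ρ ≤ plen ω' σ := by
    intro ρ hρ
    have hρP : PathFT ((0,0) : Site) (z' - a) ρ := isPathTo_iff.mp hρ
    have hρa : PathFT a z' (ρ.map (· + a)) := hlift ρ hρP
    have hφ : PathFT ((0,0) : Site) z' (p ++ (ρ.map (· + a)).tail) := pathFT_glue hp hρa
    have hφlen : plen ω (p ++ (ρ.map (· + a)).tail) + ω a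
        = plen ω p + plen ω (ρ.map (· + a)) := plen_glue ω p hρa.1
    have hle : plen ω (p ++ (ρ.map (· + a)).tail) ≤ plen ω γ := hγ.1.2 _ (isPathTo_iff.mpr hφ)
    have h1 : plen ω (ρ.map (· + a)) = plen ω' ρ := plen_map_add ω a ρ
    linarith
  refine ⟨⟨isPathTo_iff.mpr hσ, hopt⟩, ?_⟩
  intro ρ hρopt
  have hρP : PathFT ((0,0) : Site) (z' - a) ρ := isPathTo_iff.mp hρopt.1
  set ρa := ρ.map (· + a) with hρadef
  have hρa : PathFT a z' ρa := hlift ρ hρP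
  set φ := p ++ ρa.tail with hφdef
  have hφ : PathFT ((0,0) : Site) z' φ := pathFT_glue hp hρa
  have hφlen : plen ω φ + ω a = plen ω p + plen ω ρa := plen_glue ω p hρa.1
  have hρσ : plen ω' ρ = plen ω' σ :=
    le_antisymm (hopt ρ hρopt.1) (hρopt.2 σ (isPathTo_iff.mpr hσ))
  have h1 : plen ω ρa = plen ω' ρ := plen_map_add ω a ρ
  have hφγ : plen ω φ = plen ω γ := by linarith
  have hφopt : IsOptimal ω z' φ :=
    ⟨isPathTo_iff.mpr hφ, fun ψ hψ => hφγ ▸ hγ.1.2 ψ hψ⟩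
  have hbel : Below γ φ := hγ.2 φ hφopt
  -- lengths
  have hσlen : σ.length = s.length := List.length_map _
  have hslen : s.length = γ.length - k := by rw [hsdef, List.length_drop]
  have hρlen : ρ.length = σ.length := by
    have h1 := hρP.length_eq
    have h2 := hσ.length_eq
    omega
  have hρalen : ρa.length = ρ.length := List.length_map _
  intro i hiσ hiρ
  rcases Nat.eq_zero_or_pos i with rfl | hipos
  · rw [get_zero_of_head? hσ.1 hiσ, get_zero_of_head? hρP.1 hiρ]
  · have hkiγ : k + i < γ.length := by omega
    have hφl : φ.length = k + ρ.length := by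
      rw [hφdef, List.length_append, List.length_tail, hρalen, hplength]
      omega
    have hkiφ : k + i < φ.length := by omega
    have hb := hbel (k + i) hkiγ hkiφ
    simp only [List.get_eq_getElem] at hb ⊢
    have his : i < s.length := by omega
    have eγ : γ[k + i]'hkiγ = s[i]'his := by
      simp only [hsdef]
      rw [List.getElem_drop]
    have hia : i < ρa.length := by omega
    have eφ : φ[k + i]'hkiφ = ρa[i]'hia := by
      simp only [hφdef]
      rw [List.getElem_append]
      rw [dif_neg (by omega : ¬ (k + i < p.length))]
      have h2 : k + i - p.length = i - 1 := by omega
      simp only [h2]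
      rw [List.getElem_tail]
      have h3 : i - 1 + 1 = i := by omega
      simp only [h3]
    have eρ : ρa[i]'hia = ρ[i]'(by omega) + a := by
      simp only [hρadef, List.getElem_map]
    have eσ : σ[i]'hiσ = s[i]'his - a := by
      simp only [hσdef, List.getElem_map]
    rw [eγ, eφ, eρ] at hb
    rw [eσ]
    simp only [Prod.snd_sub, Prod.snd_add] at hb ⊢
    omega

lemma key_shift (ω : Site → ℝ) (a : Site) (ha : a ∈ posQuad)
    (h1 : a ∈ lowOpt ω (a + (1, 0))) (h2 : a ∈ lowOpt ω (a + (0, 1)))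
    (z' : Site) (h : a + (1, 1) ∈ lowOpt ω z') :
    a.1 ≤ z'.1 ∧ a.2 ≤ z'.2 ∧ ((1, 1) : Site) ∈ lowOpt (fun x => ω (a + x)) (z' - a) := by
  have hγ : IsLowOptimal ω z' (lowOpt ω z') := mem_lowOpt_spec h
  set γ := lowOpt ω z' with hγdef
  have hγP : PathFT ((0,0) : Site) z' γ := isPathTo_iff.mp hγ.1.1
  obtain ⟨⟨j, hj⟩, hjw⟩ := List.mem_iff_get.mp h
  have hjval : (j : ℤ) = a.1 + a.2 + 2 := by
    have := hγP.get_index hj hjw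
    simp [Prod.fst_add, Prod.snd_add] at this
    omega
  have hapos : 0 ≤ a.1 ∧ 0 ≤ a.2 := ha
  have hj2 : 2 ≤ j := by omega
  have hj1 : j - 1 < γ.length := by omega
  have hstep := chain'_get_step hγP.2.2 (by omega : j = (j - 1) + 1) hj1 hj
  set w := γ.get ⟨j - 1, hj1⟩ with hwdef
  have hw : a ∈ lowOpt ω w := by
    rcases hstep with hv | hv
    · have heq : w + (1, 0) = a + (1, 1) := hv.symm.trans hjw
      have hwv : w = a + (0, 1) := by
        have h' : a + (1, 1) = (a + (0, 1)) + (1, 0) := by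
          apply Prod.ext <;> simp
        exact add_right_cancel (heq.trans h')
      rw [hwv]; exact h2
    · have heq : w + (0, 1) = a + (1, 1) := hv.symm.trans hjw
      have hwv : w = a + (1, 0) := by
        have h' : a + (1, 1) = (a + (1, 0)) + (0, 1) := by
          apply Prod.ext <;> simp
        exact add_right_cancel (heq.trans h')
      rw [hwv]; exact h1
  have hpre := prefix_lowOptimal hγ hj1
  have hloww : lowOpt ω w = γ.take (j - 1 + 1) := lowOpt_eq hpre
  have haγ : a ∈ γ := List.take_subset _ _ (hloww ▸ hw)
  obtain ⟨⟨k, hk⟩, hka⟩ := List.mem_iff_get.mp haγ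
  have hkval : (k : ℤ) = a.1 + a.2 := by
    have := hγP.get_index hk hka
    simp at this
    omega
  have hsuf := suffix_lowOptimal hγ hk hka
  have hlows : lowOpt (fun x => ω (a + x)) (z' - a) = (γ.drop k).map (· - a) :=
    lowOpt_eq hsuf
  have hs : PathFT a z' (γ.drop k) := by
    have := pathFT_drop hγP hk
    rwa [hka] at this
  have hle := hs.le_coords
  have hmem : a + (1, 1) ∈ γ.drop k := by
    have hj' : j - k < (γ.drop k).length := by rw [List.length_drop]; omega
    refine List.mem_iff_get.mpr ⟨⟨j - k, hj'⟩, ?_⟩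
    simp only [List.get_eq_getElem, List.getElem_drop]
    have hkj : k + (j - k) = j := by omega
    simp only [hkj]
    simpa using hjw
  refine ⟨hle.1, hle.2, ?_⟩
  rw [hlows]
  refine List.mem_map.mpr ⟨a + (1, 1), hmem, ?_⟩
  exact add_sub_cancel_left a _

open MeasureTheory

/-- Theorem 2, first part: for a translation-invariant probability measure `ℙ` and
`A ⊆ 𝕋` satisfying the growth property,
`ℙ(T_{a+(1,1)} ∈ A, Ω^a) ≤ ℙ(T_{(1,1)} ∈ A, τ_a(Ω^a))`. -/
theorem stochastic_domination (ℙ : Measure CfgNN) [IsProbabilityMeasure ℙ]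
    (hinv : ∀ a : Site, ℙ.map (shift a) = ℙ)
    (a : Site) (ha : a ∈ posQuad)
    (A : Set LPPTree) (hA_sub : A ⊆ TreeSet) (hA : GrowthProperty A)
    (hmeas : ∀ z ∈ posQuad, MeasurableSet {ω : CfgNN | subtree (toCfg ω) z ∈ A}) :
    ℙ ({ω : CfgNN | subtree (toCfg ω) (a + (1, 1)) ∈ A} ∩ OmegaSup a)
      ≤ ℙ ({ω : CfgNN | subtree (toCfg ω) ((1, 1) : Site) ∈ A} ∩ (shift a '' OmegaSup a)) := by
  classical
  have hmeasf : Measurable (shift a) :=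
    measurable_pi_lambda _ (fun z => measurable_pi_apply _)
  set S := {ω : CfgNN | subtree (toCfg ω) ((1, 1) : Site) ∈ A} ∩ (shift a '' OmegaSup a) with hS
  have hsub : {ω : CfgNN | subtree (toCfg ω) (a + (1, 1)) ∈ A} ∩ OmegaSup a ⊆ shift a ⁻¹' S := by
    rintro ω ⟨hT, hΩ⟩
    refine ⟨?_, ⟨ω, hΩ, rfl⟩⟩
    refine hA (subtree (toCfg ω) (a + (1, 1))) hT
      (subtree (toCfg (shift a ω)) ((1, 1) : Site)) ?_ ?_
    · exact ⟨toCfg (shift a ω), (1, 1), fun s => (shift a ω s).coe_nonneg,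
        ⟨by norm_num, by norm_num⟩, rfl⟩
    · rintro x ⟨z', ⟨hzq, hzmem⟩, rfl⟩
      obtain ⟨hle1, hle2, hmem⟩ := key_shift (toCfg ω) a ha hΩ.1 hΩ.2 z' hzmem
      refine ⟨z' - a, ⟨⟨?_, ?_⟩, ?_⟩, ?_⟩
      · exact sub_nonneg.mpr hle1
      · exact sub_nonneg.mpr hle2
      · exact hmem
      · show z' - a - (1, 1) = z' - (a + (1, 1))
        rw [sub_sub]
  calc ℙ ({ω : CfgNN | subtree (toCfg ω) (a + (1, 1)) ∈ A} ∩ OmegaSup a)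
      ≤ ℙ (shift a ⁻¹' S) := measure_mono hsub
    _ ≤ (ℙ.map (shift a)) S := Measure.le_map_apply hmeasf.aemeasurable S
    _ = ℙ S := by rw [hinv a]
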